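/- Let d₁, ..., dₘ be positive integers such that for every j ∈ {1,...,m}, d_j does not divide lcm(dᵢ : i ≠ j). Then lcm(d₁, ..., dₘ) ≥ ∏_{i=1}^m pᵢ, where pᵢ denotes the i-th smallest prime number. -/

import Mathlib

open Finset

lemma prime_set_prod_ge (S : Finset ℕ) (hS : ∀ p ∈ S, p.Prime) {m : ℕ} (hm : S.card = m) :
    ∏ i ∈ Finset.range m, Nat.nth Nat.Prime i ≤ ∏ p ∈ S, p := by
  have e := S.orderIsoOfFin hm
  have key : ∀ i : Fin m, Nat.nth Nat.Prime i ≤ (e i : ℕ) := by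
    intro i
    have hcount : (i : ℕ) < Nat.count Nat.Prime ((e i : ℕ) + 1) := by
      rw [Nat.count_eq_card_filter_range]
      have h1 : (Finset.range ((i : ℕ) + 1)).card ≤
          ((Finset.range ((e i : ℕ) + 1)).filter Nat.Prime).card := by
        apply Finset.card_le_card_of_injOn
          (fun j => (e ⟨min j (i : ℕ), by omega⟩ : ℕ))
        · intro j hj
          simp only [Finset.mem_coe, Finset.mem_range] at hj
          simp only [Finset.mem_coe, Finset.mem_filter, Finset.mem_range]
          refine ⟨?_, hS _ (e _).2⟩
          have := e.monotone (show (⟨min j (i:ℕ), by omega⟩ : Fin m) ≤ i by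
            simp only [Fin.le_def]; exact min_le_right _ _)
          exact Nat.lt_succ_of_le this
        · intro a ha b hb hab
          simp only [Finset.mem_coe, Finset.mem_range] at ha hb
          have h3 := congrArg Fin.val (e.injective (Subtype.ext hab))
          have h4 : min a (i:ℕ) = min b (i:ℕ) := h3
          omega
      simpa using h1
    have := Nat.nth_lt_of_lt_count hcount
    omega
  have h2 : ∏ p ∈ S, p = ∏ i : Fin m, (e i : ℕ) := by
    rw [← Finset.prod_coe_sort S (fun x => x)]
    exact (Equiv.prod_comp e.toEquiv (fun x : S => (x : ℕ))).symm
  rw [h2, ← Fin.prod_univ_eq_prod_range]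
  exact Finset.prod_le_prod (fun i _ => Nat.zero_le _) (fun i _ => key i)

/-- If no d_j divides the lcm of the others, then lcm(d₁,…,dₘ) ≥ product of the first m primes. -/
theorem stmt_4 (m : ℕ) (d : Fin m → ℕ) (hd : ∀ j, 0 < d j)
    (h : ∀ j, ¬ d j ∣ (Finset.univ.erase j).lcm d) :
    Finset.univ.lcm d ≥ ∏ i ∈ Finset.range m, Nat.nth Nat.Prime i := by
  set L := Finset.univ.lcm d with hL
  have hL0 : L ≠ 0 := by
    rw [hL, Ne, Finset.lcm_eq_zero_iff]
    rintro ⟨j, -, hj⟩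
    exact (hd j).ne' hj
  have hE0 : ∀ j : Fin m, (Finset.univ.erase j).lcm d ≠ 0 := by
    intro j
    rw [Ne, Finset.lcm_eq_zero_iff]
    rintro ⟨i, -, hi⟩
    exact (hd i).ne' hi
  -- choose a prime for each j
  have key : ∀ j : Fin m, ∃ p : ℕ,
      ((Finset.univ.erase j).lcm d).factorization p < (d j).factorization p := by
    intro j
    by_contra hc
    push_neg at hc
    apply h j
    rw [← Nat.factorization_le_iff_dvd (hd j).ne' (hE0 j)]
    intro p
    exact hc p
  choose P hP using key
  have hPdvd : ∀ j, (P j) ^ ((d j).factorization (P j)) ∣ d j := fun j =>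
    Nat.ordProj_dvd _ _
  have hPprime : ∀ j, (P j).Prime := by
    intro j
    by_contra hp
    have h1 := hP j
    simp only [Nat.factorization_eq_zero_of_not_prime _ hp] at h1
    omega
  have hfac_le : ∀ (j i : Fin m), i ≠ j →
      (d i).factorization ≤ ((Finset.univ.erase j).lcm d).factorization := by
    intro j i hij
    rw [Nat.factorization_le_iff_dvd (hd i).ne' (hE0 j)]
    exact Finset.dvd_lcm (by simp [hij])
  have hPinj : Function.Injective P := by
    intro a b hab
    by_contra hne
    have h1 := hP a
    have h2 := hP b
    have h3 := Finsupp.le_def.mp (hfac_le a b (Ne.symm hne)) (P a)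
    have h4 := Finsupp.le_def.mp (hfac_le b a hne) (P b)
    rw [← hab] at h2 h4
    omega
  have hPmem : ∀ j, P j ∈ L.primeFactors := by
    intro j
    rw [Nat.mem_primeFactors]
    refine ⟨hPprime j, ?_, hL0⟩
    exact dvd_trans (dvd_trans (dvd_pow_self _ (by have := hP j; omega)) (hPdvd j))
      (Finset.dvd_lcm (Finset.mem_univ j))
  set S := Finset.image P Finset.univ with hS
  have hScard : S.card = m := by
    rw [hS, Finset.card_image_of_injective _ hPinj, Finset.card_univ, Fintype.card_fin]
  have hSsub : S ⊆ L.primeFactors := by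
    intro p hp
    rw [hS, Finset.mem_image] at hp
    obtain ⟨j, -, rfl⟩ := hp
    exact hPmem j
  have h5 : ∏ i ∈ Finset.range m, Nat.nth Nat.Prime i ≤ ∏ p ∈ S, p :=
    prime_set_prod_ge S (fun p hp => Nat.prime_of_mem_primeFactors (hSsub hp)) hScard
  have h6 : ∏ p ∈ S, p ∣ L :=
    dvd_trans (Finset.prod_dvd_prod_of_subset _ _ _ hSsub) (Nat.prod_primeFactors_dvd L)
  exact le_trans h5 (Nat.le_of_dvd (Nat.pos_of_ne_zero hL0) h6)
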